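/- arXiv:2102.02016 — 5 statements merged into one kernel-verified Lean document; each statement's English description precedes it below -/
import Mathlib

section
/- Let $W$ (hypothesis) and $S$ (training set of $n$ i.i.d. samples from $\mu$) have joint distribution $P_{W,S}$, and suppose the generalization error gen$(w,s) = L_P(w,\mu) - L_E(w,s)$ is $\sigma/\sqrt{n}$-subgaussian under $P_S$ for each fixed $w$, with mean zero. Then for conjugate exponents $t, q > 1$ with $1/t + 1/q = 1$, and any positive integer $m$ with $mq > 2$ and $mq \in \mathbb{Z}^+$: $|\mathbb{E}_{P_{W,S}}[\text{gen}(W,S)^m]| \le \sigma^m (mq/n)^{m/2} e^{m/e} (I_P^{(t)}(W;S) + 1)^{1/t}$. -/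
open MeasureTheory Real

/-- `X` is `σ`-subgaussian under `P`: its MGF exists and is bounded by that of a
Gaussian with variance `σ²` (for a centered variable). -/
def IsSubgaussian {Ω : Type*} [MeasurableSpace Ω] (X : Ω → ℝ) (σ : ℝ)
    (P : Measure Ω) : Prop :=
  ∀ l : ℝ, Integrable (fun ω => Real.exp (l * X ω)) P ∧
    ∫ ω, Real.exp (l * X ω) ∂P ≤ Real.exp (l ^ 2 * σ ^ 2 / 2)

lemma aux_rpow_le_exp {u p : ℝ} (hu : 0 ≤ u) (hp : 0 < p) :
    u ^ p ≤ (p / Real.exp 1) ^ p * Real.exp u := by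
  rcases eq_or_lt_of_le hu with h | h
  · rw [← h, Real.zero_rpow hp.ne']
    positivity
  · have h1 : Real.log (u / p) ≤ u / p - 1 := Real.log_le_sub_one_of_pos (div_pos h hp)
    rw [Real.log_div h.ne' hp.ne'] at h1
    have h2 := mul_le_mul_of_nonneg_left h1 hp.le
    have h3 : p * (u / p - 1) = u - p := by field_simp
    calc u ^ p = Real.exp (Real.log u * p) := by rw [Real.rpow_def_of_pos h]
    _ ≤ Real.exp ((Real.log p - 1) * p + u) := by
        apply Real.exp_le_exp.2; nlinarith
    _ = (p / Real.exp 1) ^ p * Real.exp u := by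
        rw [Real.exp_add, Real.rpow_def_of_pos (div_pos hp (Real.exp_pos 1)),
          Real.log_div hp.ne' (Real.exp_pos 1).ne', Real.log_exp]

lemma aux_K_le_Bq {σ nn q : ℝ} {m : ℕ} (hσ : 0 < σ) (hnn : 0 < nn) (hq : 1 < q)
    (hP2 : 2 < (m : ℝ) * q) :
    (Real.sqrt ((m : ℝ) * q) * (σ / Real.sqrt nn) / Real.exp 1) ^ ((m : ℝ) * q) *
      (2 * Real.exp ((m : ℝ) * q / 2)) ≤
    (σ ^ m * ((m : ℝ) * q / nn) ^ ((m : ℝ) / 2) * Real.exp ((m : ℝ) / Real.exp 1)) ^ q := by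
  have hq0 : (0:ℝ) < q := by linarith
  have hP0 : (0:ℝ) < (m : ℝ) * q := by linarith
  set P : ℝ := (m : ℝ) * q with hP
  have hpn : (0:ℝ) < P / nn := div_pos hP0 hnn
  have hbase : Real.sqrt P * (σ / Real.sqrt nn) / Real.exp 1
      = σ * Real.sqrt (P / nn) / Real.exp 1 := by
    rw [Real.sqrt_div hP0.le]
    ring
  have hL : (Real.sqrt P * (σ / Real.sqrt nn) / Real.exp 1) ^ P
      = σ ^ P * (P / nn) ^ (P / 2) / Real.exp P := by
    rw [hbase, Real.div_rpow (by positivity) (Real.exp_pos 1).le,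
      Real.mul_rpow hσ.le (Real.sqrt_nonneg _), Real.exp_one_rpow,
      Real.sqrt_eq_rpow, ← Real.rpow_mul hpn.le,
      show (1 / 2 : ℝ) * P = P / 2 by ring]
  have hR : (σ ^ m * (P / nn) ^ ((m : ℝ) / 2) * Real.exp ((m : ℝ) / Real.exp 1)) ^ q
      = σ ^ P * (P / nn) ^ (P / 2) * Real.exp (P / Real.exp 1) := by
    rw [Real.mul_rpow (by positivity) (Real.exp_pos _).le,
      Real.mul_rpow (by positivity) (Real.rpow_nonneg hpn.le _),
      ← Real.rpow_natCast σ m, ← Real.rpow_mul hσ.le,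
      ← Real.rpow_mul hpn.le, ← Real.exp_mul,
      show ((m : ℝ) / 2) * q = P / 2 by rw [hP]; ring,
      show (m : ℝ) / Real.exp 1 * q = P / Real.exp 1 by rw [hP]; ring,
      show (m : ℝ) * q = P from hP.symm]
  rw [hL, hR]
  have hA : (0:ℝ) < σ ^ P * (P / nn) ^ (P / 2) := by positivity
  have hkey : 2 * Real.exp (P / 2) ≤ Real.exp (P / Real.exp 1) * Real.exp P := by
    have h1 : (2:ℝ) ≤ Real.exp 1 := by
      have := Real.add_one_le_exp 1; linarith
    have hPe : (0:ℝ) ≤ P / Real.exp 1 := by positivity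
    calc 2 * Real.exp (P / 2) = Real.exp (P / 2) * 2 := by ring
    _ ≤ Real.exp (P / 2) * Real.exp 1 :=
        mul_le_mul_of_nonneg_left h1 (Real.exp_pos _).le
    _ = Real.exp (P / 2 + 1) := (Real.exp_add _ _).symm
    _ ≤ Real.exp (P / Real.exp 1 + P) := by
        apply Real.exp_le_exp.2
        linarith
    _ = Real.exp (P / Real.exp 1) * Real.exp P := Real.exp_add _ _
  calc σ ^ P * (P / nn) ^ (P / 2) / Real.exp P * (2 * Real.exp (P / 2))
      = σ ^ P * (P / nn) ^ (P / 2) * (2 * Real.exp (P / 2) / Real.exp P) := by ring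
    _ ≤ σ ^ P * (P / nn) ^ (P / 2) * Real.exp (P / Real.exp 1) := by
        apply mul_le_mul_of_nonneg_left _ hA.le
        rw [div_le_iff₀ (Real.exp_pos _)]
        linarith [hkey]

/-- Power-information bound on the `m`-th moment of the generalization error:
`|E_{P_{W,S}}[gen^m]| ≤ σ^m (mq/n)^{m/2} e^{m/e} (I_P^{(t)}(W;S)+1)^{1/t}`. -/
theorem moment_bound_power_information
    {W S : Type*} [MeasurableSpace W] [MeasurableSpace S]
    (joint : Measure (W × S)) [IsProbabilityMeasure joint]
    (gen : W → S → ℝ) (hgen : Measurable (Function.uncurry gen))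
    (σ : ℝ) (hσ : 0 < σ) (n : ℕ) (hn : 0 < n)
    (hsubg : ∀ w : W, IsSubgaussian (fun s => gen w s) (σ / Real.sqrt n) joint.snd)
    (hmean : ∀ w : W, ∫ s, gen w s ∂joint.snd = 0)
    (hac : joint ≪ joint.fst.prod joint.snd)
    (t q : ℝ) (ht : 1 < t) (hq : 1 < q) (htq : 1 / t + 1 / q = 1)
    (m : ℕ) (hm : 0 < m) (hmq2 : 2 < (m : ℝ) * q) (hmqint : ∃ k : ℕ, (k : ℝ) = (m : ℝ) * q)
    (hrt : Integrable
      (fun p => ((joint.rnDeriv (joint.fst.prod joint.snd) p).toReal) ^ t)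
      (joint.fst.prod joint.snd)) :
    |∫ p, (gen p.1 p.2) ^ m ∂joint| ≤
      σ ^ m * ((m : ℝ) * q / n) ^ ((m : ℝ) / 2) * Real.exp (m / Real.exp 1) *
        ((∫ p, (((joint.rnDeriv (joint.fst.prod joint.snd) p).toReal) ^ t - 1)
            ∂(joint.fst.prod joint.snd)) + 1) ^ (1 / t) := by
  classical
  set pr := joint.fst.prod joint.snd with hprdef
  set ρ : W × S → ℝ := fun z => (joint.rnDeriv pr z).toReal with hρdef
  set P : ℝ := (m : ℝ) * q with hPdef
  have hq0 : (0:ℝ) < q := by linarith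
  have ht0 : (0:ℝ) < t := by linarith
  have hP2 : (2:ℝ) < P := hmq2
  have hP0 : (0:ℝ) < P := by linarith
  have hn0 : (0:ℝ) < (n:ℝ) := by exact_mod_cast hn
  set s : ℝ := σ / Real.sqrt n with hsdef
  have hs : 0 < s := div_pos hσ (Real.sqrt_pos.2 hn0)
  set lam : ℝ := Real.sqrt P / s with hlamdef
  have hlam : 0 < lam := div_pos (Real.sqrt_pos.2 hP0) hs
  set Cb : ℝ := (Real.sqrt P * s / Real.exp 1) ^ P with hCbdef
  have hCb0 : 0 ≤ Cb := Real.rpow_nonneg (by positivity) _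
  have hρmeas : Measurable ρ := (Measure.measurable_rnDeriv joint pr).ennreal_toReal
  have hρnn : ∀ z, 0 ≤ ρ z := fun z => ENNReal.toReal_nonneg
  -- pointwise bound
  have key : ∀ x : ℝ, |x| ^ P ≤ Cb * (Real.exp (lam * x) + Real.exp (-(lam * x))) := by
    intro x
    have h1 : (lam * |x|) ^ P ≤ (P / Real.exp 1) ^ P * Real.exp (lam * |x|) :=
      aux_rpow_le_exp (by positivity) hP0
    rw [Real.mul_rpow hlam.le (abs_nonneg x)] at h1
    have h2 : Real.exp (lam * |x|) ≤ Real.exp (lam * x) + Real.exp (-(lam * x)) := by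
      rcases le_total 0 x with hx | hx
      · rw [abs_of_nonneg hx]
        exact le_add_of_nonneg_right (Real.exp_pos _).le
      · rw [abs_of_nonpos hx, mul_neg]
        exact le_add_of_nonneg_left (Real.exp_pos _).le
    have hlP : (0:ℝ) < lam ^ P := Real.rpow_pos_of_pos hlam P
    have hCbeq : (P / Real.exp 1) ^ P / lam ^ P = Cb := by
      rw [hCbdef, ← Real.div_rpow (by positivity) hlam.le]
      congr 1
      rw [hlamdef]
      have h3 : Real.sqrt P ≠ 0 := (Real.sqrt_pos.2 hP0).ne'
      have h6 : Real.sqrt P * Real.sqrt P = P := Real.mul_self_sqrt hP0.le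
      field_simp
      have h7 : Real.sqrt P ^ 2 = (m : ℝ) * q := by rw [sq, h6]
      rw [h7]
    have h4 : lam ^ P * |x| ^ P ≤ (P / Real.exp 1) ^ P * (Real.exp (lam * x) + Real.exp (-(lam * x))) :=
      h1.trans (mul_le_mul_of_nonneg_left h2 (by positivity))
    calc |x| ^ P = lam ^ P * |x| ^ P / lam ^ P := by field_simp
    _ ≤ (P / Real.exp 1) ^ P * (Real.exp (lam * x) + Real.exp (-(lam * x))) / lam ^ P :=
        (div_le_div_iff_of_pos_right hlP).2 h4
    _ = Cb * (Real.exp (lam * x) + Real.exp (-(lam * x))) := by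
        rw [← hCbeq]; ring
  -- per-w integrability and integral bound
  set K : ℝ := Cb * (2 * Real.exp (P / 2)) with hKdef
  have hmw : ∀ w, Measurable (fun s' => gen w s') := fun w =>
    hgen.comp measurable_prodMk_left
  have hE : ∀ w, Integrable
      (fun s' => Real.exp (lam * gen w s') + Real.exp (-(lam * gen w s'))) joint.snd := by
    intro w
    have h1 := (hsubg w lam).1
    have h2 := (hsubg w (-lam)).1
    simp only [neg_mul] at h2
    exact h1.add h2
  have hwint : ∀ w : W, Integrable (fun s' => |gen w s'| ^ P) joint.snd := by
    intro w
    refine ((hE w).const_mul Cb).mono'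
      (((Real.continuous_rpow_const hP0.le).measurable.comp (hmw w).norm).aestronglyMeasurable) ?_
    filter_upwards with s'
    rw [Real.norm_of_nonneg (Real.rpow_nonneg (abs_nonneg _) _)]
    exact key _
  have hls : lam ^ 2 * s ^ 2 / 2 = P / 2 := by
    rw [hlamdef, div_pow, Real.sq_sqrt hP0.le]
    field_simp
  have hwbnd : ∀ w : W, ∫ s', |gen w s'| ^ P ∂joint.snd ≤ K := by
    intro w
    have h2int : Integrable (fun s' => Real.exp (-(lam * gen w s'))) joint.snd := by
      have := (hsubg w (-lam)).1
      simpa only [neg_mul] using this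
    have e1 : ∫ s', Real.exp (lam * gen w s') ∂joint.snd ≤ Real.exp (P / 2) := by
      have h := (hsubg w lam).2
      rwa [hls] at h
    have e2 : ∫ s', Real.exp (-(lam * gen w s')) ∂joint.snd ≤ Real.exp (P / 2) := by
      have h := (hsubg w (-lam)).2
      simp only [neg_mul] at h
      rwa [neg_sq, hls] at h
    calc ∫ s', |gen w s'| ^ P ∂joint.snd
        ≤ ∫ s', Cb * (Real.exp (lam * gen w s') + Real.exp (-(lam * gen w s'))) ∂joint.snd :=
          integral_mono (hwint w) ((hE w).const_mul Cb) fun s' => key _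
      _ = Cb * (∫ s', Real.exp (lam * gen w s') ∂joint.snd
            + ∫ s', Real.exp (-(lam * gen w s')) ∂joint.snd) := by
          rw [integral_const_mul, integral_add (hsubg w lam).1 h2int]
      _ ≤ Cb * (Real.exp (P / 2) + Real.exp (P / 2)) := by
          apply mul_le_mul_of_nonneg_left _ hCb0
          linarith
      _ = K := by rw [hKdef]; ring
  -- product integrability and bound
  set F : W × S → ℝ := fun z => |gen z.1 z.2| ^ P with hFdef
  have hFmeas : Measurable F :=
    (Real.continuous_rpow_const hP0.le).measurable.comp hgen.norm
  have hFnn : ∀ z, 0 ≤ F z := fun z => Real.rpow_nonneg (abs_nonneg _) _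
  have hlint : ∫⁻ z, ENNReal.ofReal (F z) ∂pr ≤ ENNReal.ofReal K := by
    rw [hprdef, lintegral_prod (fun z => ENNReal.ofReal (F z)) ((ENNReal.measurable_ofReal.comp hFmeas).aemeasurable)]
    have inner : ∀ w, ∫⁻ s', ENNReal.ofReal (F (w, s')) ∂joint.snd ≤ ENNReal.ofReal K := by
      intro w
      rw [← ofReal_integral_eq_lintegral_ofReal (hwint w)
        (Filter.Eventually.of_forall fun s' => Real.rpow_nonneg (abs_nonneg _) _)]
      exact ENNReal.ofReal_le_ofReal (hwbnd w)
    calc ∫⁻ w, ∫⁻ s', ENNReal.ofReal (F (w, s')) ∂joint.snd ∂joint.fst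
        ≤ ∫⁻ _, ENNReal.ofReal K ∂joint.fst := lintegral_mono inner
      _ = ENNReal.ofReal K := by simp
  have hFint : Integrable F pr :=
    ⟨hFmeas.aestronglyMeasurable, (hasFiniteIntegral_iff_ofReal
      (Filter.Eventually.of_forall hFnn)).2 (lt_of_le_of_lt hlint ENNReal.ofReal_lt_top)⟩
  have hFbnd : ∫ z, F z ∂pr ≤ K := by
    rw [integral_eq_lintegral_of_nonneg_ae (Filter.Eventually.of_forall hFnn)
      hFmeas.aestronglyMeasurable]
    have hK0 : (0:ℝ) ≤ K := by
      rw [hKdef]; exact mul_nonneg hCb0 (by positivity)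
    calc (∫⁻ z, ENNReal.ofReal (F z) ∂pr).toReal
        ≤ (ENNReal.ofReal K).toReal := ENNReal.toReal_mono ENNReal.ofReal_ne_top hlint
      _ = K := ENNReal.toReal_ofReal hK0
  -- Memℒp facts
  have hρmem : MemLp ρ (ENNReal.ofReal t) pr := by
    have h0 : ENNReal.ofReal t ≠ 0 := by
      simp only [ne_eq, ENNReal.ofReal_eq_zero, not_le]; exact ht0
    refine (memLp_norm_rpow_iff hρmeas.aestronglyMeasurable h0 ENNReal.ofReal_ne_top).1 ?_
    rw [ENNReal.div_self h0 ENNReal.ofReal_ne_top, ENNReal.toReal_ofReal ht0.le,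
      memLp_one_iff_integrable]
    refine hrt.congr (Filter.Eventually.of_forall fun z => ?_)
    show (joint.rnDeriv pr z).toReal ^ t = ‖ρ z‖ ^ t
    rw [Real.norm_of_nonneg (hρnn z)]
  set G : W × S → ℝ := fun z => |gen z.1 z.2| ^ m with hGdef
  have hGq : ∀ z, G z ^ q = F z := by
    intro z
    show (|gen z.1 z.2| ^ m : ℝ) ^ q = |gen z.1 z.2| ^ P
    rw [← Real.rpow_natCast |gen z.1 z.2| m, ← Real.rpow_mul (abs_nonneg _)]
  have hGmeas : Measurable G := hgen.norm.pow_const m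
  have hGmem : MemLp G (ENNReal.ofReal q) pr := by
    have h0 : ENNReal.ofReal q ≠ 0 := by
      simp only [ne_eq, ENNReal.ofReal_eq_zero, not_le]; exact hq0
    refine (memLp_norm_rpow_iff hGmeas.aestronglyMeasurable h0 ENNReal.ofReal_ne_top).1 ?_
    rw [ENNReal.div_self h0 ENNReal.ofReal_ne_top, ENNReal.toReal_ofReal hq0.le,
      memLp_one_iff_integrable]
    refine hFint.congr (Filter.Eventually.of_forall fun z => ?_)
    show F z = ‖G z‖ ^ q
    rw [Real.norm_of_nonneg (by exact pow_nonneg (abs_nonneg _) m : (0:ℝ) ≤ G z), hGq z]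
  -- Hölder
  have holder : ∫ z, ρ z * G z ∂pr ≤
      (∫ z, ρ z ^ t ∂pr) ^ (1/t) * (∫ z, G z ^ q ∂pr) ^ (1/q) := by
    refine integral_mul_le_Lp_mul_Lq_of_nonneg (Real.holderConjugate_iff.2 ⟨ht, by simpa [one_div] using htq⟩)
      (Filter.Eventually.of_forall hρnn) (Filter.Eventually.of_forall fun z => by positivity) hρmem hGmem
  -- constants
  set B : ℝ := σ ^ m * ((m : ℝ) * q / n) ^ ((m:ℝ)/2) * Real.exp (m / Real.exp 1) with hBdef
  have hB0 : 0 < B := by positivity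
  have hKB : K ≤ B ^ q := by
    rw [hKdef, hBdef, hCbdef, hsdef, hPdef]
    exact aux_K_le_Bq hσ hn0 hq hmq2
  have hsecond : (∫ z, G z ^ q ∂pr) ^ (1/q) ≤ B := by
    have h1 : ∫ z, G z ^ q ∂pr = ∫ z, F z ∂pr := by
      exact integral_congr_ae (Filter.Eventually.of_forall fun z => hGq z)
    have h2 : (∫ z, G z ^ q ∂pr) ^ (1/q) ≤ (B ^ q) ^ (1/q) := by
      apply Real.rpow_le_rpow (by rw [h1]; exact integral_nonneg hFnn)
        (by rw [h1]; exact hFbnd.trans hKB) (by positivity)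
    rwa [← Real.rpow_mul hB0.le, mul_one_div_cancel hq0.ne', Real.rpow_one] at h2
  -- information term
  have hinfo : (∫ z, (ρ z ^ t - 1) ∂pr) + 1 = ∫ z, ρ z ^ t ∂pr := by
    haveI : IsProbabilityMeasure pr := by
      rw [hprdef]; infer_instance
    rw [integral_sub hrt (integrable_const 1), integral_const]
    simp
    rfl
  -- main chain
  have hfirstnn : 0 ≤ (∫ z, ρ z ^ t ∂pr) ^ (1/t) :=
    Real.rpow_nonneg (integral_nonneg fun z => Real.rpow_nonneg (hρnn z) t) _
  calc |∫ z, gen z.1 z.2 ^ m ∂joint|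
      = |∫ z, ρ z • (gen z.1 z.2 ^ m) ∂pr| := by
        rw [integral_rnDeriv_smul hac]
    _ ≤ ∫ z, ‖ρ z • (gen z.1 z.2 ^ m)‖ ∂pr := by
        rw [← Real.norm_eq_abs]; exact norm_integral_le_integral_norm _
    _ = ∫ z, ρ z * G z ∂pr := by
        refine integral_congr_ae (Filter.Eventually.of_forall fun z => ?_)
        show ‖ρ z • gen z.1 z.2 ^ m‖ = ρ z * G z
        rw [smul_eq_mul, Real.norm_eq_abs, abs_mul, abs_of_nonneg (hρnn z), abs_pow]
    _ ≤ (∫ z, ρ z ^ t ∂pr) ^ (1/t) * (∫ z, G z ^ q ∂pr) ^ (1/q) := holder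
    _ ≤ (∫ z, ρ z ^ t ∂pr) ^ (1/t) * B := by
        exact mul_le_mul_of_nonneg_left hsecond hfirstnn
    _ = B * ((∫ z, (ρ z ^ t - 1) ∂pr) + 1) ^ (1/t) := by rw [hinfo, mul_comm]
end

section
/- Under the assumptions of the power-information moment bound, specializing $t = q = 2$: the $m$-th moment of the generalization error satisfies $|\mathbb{E}_{P_{W,S}}[\text{gen}(W,S)^m]| \le \sigma^m (2m/n)^{m/2} e^{m/e} \sqrt{I_{\chi^2}(W;S) + 1}$, where $I_{\chi^2}(W;S) = \chi^2(P_{W,S} \| P_W \otimes P_S)$. -/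
open MeasureTheory Real

/-- Pointwise bound: `x^(2q) ≤ (2q/(e l))^(2q) (e^{lx} + e^{-lx})` for `l > 0`. -/
lemma pointwise_pow_le (q : ℕ) (hq : 0 < q) {l : ℝ} (hl : 0 < l) (x : ℝ) :
    x ^ (2 * q) ≤ (2 * q / (Real.exp 1 * l)) ^ (2 * q) *
      (Real.exp (l * x) + Real.exp (-(l * x))) := by
  have hq' : (0:ℝ) < 2 * q := by positivity
  set t : ℝ := l * |x| with ht
  have ht0 : 0 ≤ t := by positivity
  -- t ≤ (2q / e) * exp (t / (2q))
  have h1 : t ≤ 2 * q / Real.exp 1 * Real.exp (t / (2 * q)) := by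
    have e1 := Real.add_one_le_exp (t / (2 * q) - 1)
    rw [sub_add_cancel, Real.exp_sub] at e1
    calc t = (2 * q) * (t / (2 * q)) := by field_simp
      _ ≤ (2 * q) * (Real.exp (t / (2 * q)) / Real.exp 1) :=
          mul_le_mul_of_nonneg_left e1 hq'.le
      _ = 2 * q / Real.exp 1 * Real.exp (t / (2 * q)) := by ring
  have h2 : t ^ (2 * q) ≤ (2 * q / Real.exp 1) ^ (2 * q) * Real.exp t := by
    calc t ^ (2 * q) ≤ (2 * q / Real.exp 1 * Real.exp (t / (2 * q))) ^ (2 * q) :=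
          pow_le_pow_left₀ ht0 h1 _
      _ = (2 * q / Real.exp 1) ^ (2 * q) * (Real.exp (t / (2 * q))) ^ (2 * q) := mul_pow _ _ _
      _ = (2 * q / Real.exp 1) ^ (2 * q) * Real.exp t := by
          rw [← Real.exp_nat_mul]
          congr 1
          push_cast
          field_simp
  have h3 : Real.exp t ≤ Real.exp (l * x) + Real.exp (-(l * x)) := by
    rcases abs_cases x with ⟨hx, _⟩ | ⟨hx, _⟩
    · rw [ht, hx]
      nlinarith [Real.exp_pos (-(l * x))]
    · rw [ht, hx]
      have : l * -x = -(l * x) := by ring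
      rw [this]
      nlinarith [Real.exp_pos (l * x)]
  have hx2q : x ^ (2 * q) = t ^ (2 * q) / l ^ (2 * q) := by
    have : |x| = t / l := by rw [ht, mul_div_cancel_left₀ _ hl.ne']
    calc x ^ (2 * q) = |x| ^ (2 * q) := by
          rw [pow_abs, abs_of_nonneg (Even.pow_nonneg ⟨q, by ring⟩ x)]
      _ = (t / l) ^ (2 * q) := by rw [this]
      _ = t ^ (2 * q) / l ^ (2 * q) := div_pow _ _ _
  rw [hx2q]
  have hC : (2 * q / (Real.exp 1 * l)) ^ (2 * q) =
      (2 * q / Real.exp 1) ^ (2 * q) / l ^ (2 * q) := by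
    rw [← div_pow]
    congr 1
    field_simp
  rw [hC]
  rw [div_mul_eq_mul_div, div_le_div_iff₀ (by positivity) (by positivity)]
  calc t ^ (2 * q) * l ^ (2 * q)
      ≤ ((2 * q / Real.exp 1) ^ (2 * q) * Real.exp t) * l ^ (2 * q) := by
        apply mul_le_mul_of_nonneg_right h2 (by positivity)
    _ ≤ ((2 * q / Real.exp 1) ^ (2 * q) * (Real.exp (l * x) + Real.exp (-(l * x)))) *
          l ^ (2 * q) := by
        apply mul_le_mul_of_nonneg_right _ (by positivity)
        exact mul_le_mul_of_nonneg_left h3 (by positivity)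
    _ = (2 * q / Real.exp 1) ^ (2 * q) * (Real.exp (l * x) + Real.exp (-(l * x))) *
          l ^ (2 * q) := by ring

/-- Moment bound for a subgaussian random variable. -/
lemma subg_moment {Ω : Type*} [MeasurableSpace Ω] {Q : Measure Ω} {X : Ω → ℝ} {σ' : ℝ}
    (hσ' : 0 < σ') (hs : IsSubgaussian X σ' Q) (q : ℕ) (hq : 0 < q) :
    ∫⁻ ω, ENNReal.ofReal (X ω ^ (2 * q)) ∂Q ≤
      ENNReal.ofReal (2 * ((2 * q) ^ q * σ' ^ (2 * q)) / Real.exp q) := by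
  have h2q : (0:ℝ) < 2 * q := by positivity
  set l : ℝ := Real.sqrt (2 * q) / σ' with hldef
  have hl : 0 < l := div_pos (Real.sqrt_pos.2 h2q) hσ'
  have hl2 : l ^ 2 = 2 * q / σ' ^ 2 := by
    rw [hldef, div_pow, Real.sq_sqrt h2q.le]
  set C : ℝ := (2 * q / (Real.exp 1 * l)) ^ (2 * q) with hCdef
  have hC0 : 0 ≤ C := by positivity
  have hint1 : Integrable (fun ω => Real.exp (l * X ω)) Q := (hs l).1
  have hint2 : Integrable (fun ω => Real.exp (-(l * X ω))) Q := by
    have := (hs (-l)).1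
    simpa [neg_mul] using this
  have hint : Integrable (fun ω => C * (Real.exp (l * X ω) + Real.exp (-(l * X ω)))) Q :=
    (hint1.add hint2).const_mul C
  have hnn : 0 ≤ᵐ[Q] fun ω => C * (Real.exp (l * X ω) + Real.exp (-(l * X ω))) := by
    filter_upwards with ω
    positivity
  have hexpval : l ^ 2 * σ' ^ 2 / 2 = q := by
    rw [hl2]
    field_simp
  have hbound2 : ∫ ω, Real.exp (-(l * X ω)) ∂Q ≤ Real.exp q := by
    have h := (hs (-l)).2
    simp only [neg_mul] at h
    have heq : (-l) ^ 2 * σ' ^ 2 / 2 = (q:ℝ) := by rw [neg_sq]; exact hexpval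
    rw [heq] at h
    exact h
  have hbound1 : ∫ ω, Real.exp (l * X ω) ∂Q ≤ Real.exp q := by
    calc ∫ ω, Real.exp (l * X ω) ∂Q ≤ Real.exp (l ^ 2 * σ' ^ 2 / 2) := (hs l).2
      _ = Real.exp q := by rw [hexpval]
  -- value of the constant
  have hCeq : C = (2 * q) ^ q * σ' ^ (2 * q) / Real.exp q ^ 2 := by
    have hl2' : l ^ 2 * σ' ^ 2 = 2 * (q:ℝ) := by
      rw [hl2]; field_simp
    have ha : (2 * (q:ℝ) / (Real.exp 1 * l)) ^ 2 = 2 * q * σ' ^ 2 / Real.exp 1 ^ 2 := by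
      rw [div_pow, div_eq_div_iff (by positivity) (by positivity)]
      linear_combination (-(2 * (q:ℝ)) * Real.exp 1 ^ 2) * hl2'
    have hb : Real.exp 1 ^ (2 * q) = Real.exp (q:ℝ) ^ 2 := by
      rw [← Real.exp_nat_mul, ← Real.exp_nat_mul]
      congr 1
      push_cast
      ring
    rw [hCdef, pow_mul, ha, div_pow, mul_pow, ← pow_mul, ← pow_mul, hb]
  calc ∫⁻ ω, ENNReal.ofReal (X ω ^ (2 * q)) ∂Q
      ≤ ∫⁻ ω, ENNReal.ofReal (C * (Real.exp (l * X ω) + Real.exp (-(l * X ω)))) ∂Q :=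
        lintegral_mono fun ω =>
          ENNReal.ofReal_le_ofReal (pointwise_pow_le q hq hl (X ω))
    _ = ENNReal.ofReal (∫ ω, C * (Real.exp (l * X ω) + Real.exp (-(l * X ω))) ∂Q) :=
        (ofReal_integral_eq_lintegral_ofReal hint hnn).symm
    _ ≤ ENNReal.ofReal (2 * ((2 * q) ^ q * σ' ^ (2 * q)) / Real.exp q) := by
        apply ENNReal.ofReal_le_ofReal
        rw [integral_const_mul, integral_add hint1 hint2]
        have : ∫ ω, Real.exp (l * X ω) ∂Q + ∫ ω, Real.exp (-(l * X ω)) ∂Q ≤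
            2 * Real.exp q := by linarith
        calc C * (∫ ω, Real.exp (l * X ω) ∂Q + ∫ ω, Real.exp (-(l * X ω)) ∂Q)
            ≤ C * (2 * Real.exp q) := mul_le_mul_of_nonneg_left this hC0
          _ = 2 * ((2 * q) ^ q * σ' ^ (2 * q)) / Real.exp q := by
              rw [hCeq]
              have he : Real.exp (q:ℝ) ≠ 0 := (Real.exp_pos _).ne'
              field_simp

/-- Chi-square information bound on the `m`-th moment of the generalization error:
`|E_{P_{W,S}}[gen^m]| ≤ σ^m (2m/n)^{m/2} e^{m/e} √(I_{χ²}(W;S)+1)`. -/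
theorem moment_bound_chi_square_information
    {W S : Type*} [MeasurableSpace W] [MeasurableSpace S]
    (joint : Measure (W × S)) [IsProbabilityMeasure joint]
    (gen : W → S → ℝ) (hgen : Measurable (Function.uncurry gen))
    (σ : ℝ) (hσ : 0 < σ) (n : ℕ) (hn : 0 < n)
    (hsubg : ∀ w : W, IsSubgaussian (fun s => gen w s) (σ / Real.sqrt n) joint.snd)
    (hmean : ∀ w : W, ∫ s, gen w s ∂joint.snd = 0)
    (hac : joint ≪ joint.fst.prod joint.snd)
    (m : ℕ) (hm : 0 < m) (hm2 : 2 < 2 * m)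
    (hr2 : Integrable
      (fun p => ((joint.rnDeriv (joint.fst.prod joint.snd) p).toReal) ^ 2)
      (joint.fst.prod joint.snd)) :
    |∫ p, (gen p.1 p.2) ^ m ∂joint| ≤
      σ ^ m * (2 * (m : ℝ) / n) ^ ((m : ℝ) / 2) * Real.exp (m / Real.exp 1) *
        Real.sqrt
          ((∫ p, ((joint.rnDeriv (joint.fst.prod joint.snd) p).toReal - 1) ^ 2
              ∂(joint.fst.prod joint.snd)) + 1) := by
  set μ := joint.fst.prod joint.snd with hμdef
  set r := joint.rnDeriv μ with hrdef
  have hrm : Measurable r := Measure.measurable_rnDeriv _ _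
  have hgm : Measurable fun p : W × S => gen p.1 p.2 := hgen
  have hn' : (0:ℝ) < n := by exact_mod_cast hn
  set σ' : ℝ := σ / Real.sqrt n with hσ'def
  have hσ' : 0 < σ' := div_pos hσ (Real.sqrt_pos.2 hn')
  set B : ℝ := 2 * ((2 * m) ^ m * σ' ^ (2 * m)) / Real.exp m with hBdef
  have hB0 : 0 ≤ B := by positivity
  set f : W × S → ENNReal := fun p => ENNReal.ofReal |gen p.1 p.2 ^ m| with hfdef
  have hfm : Measurable f := ((hgm.pow_const m).abs).ennreal_ofReal
  have hf2 : ∀ p, f p ^ (2:ℝ) = ENNReal.ofReal (gen p.1 p.2 ^ (2 * m)) := by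
    intro p
    rw [hfdef, show (2:ℝ) = ((2:ℕ):ℝ) by norm_num, ENNReal.rpow_natCast,
      ← ENNReal.ofReal_pow (abs_nonneg _)]
    congr 1
    rw [sq_abs, ← pow_mul, mul_comm]
  have hgm2 : Measurable fun p : W × S => ENNReal.ofReal (gen p.1 p.2 ^ (2 * m)) :=
    (hgm.pow_const (2 * m)).ennreal_ofReal
  -- step 1
  have step1 : |∫ p, gen p.1 p.2 ^ m ∂joint| ≤ (∫⁻ p, f p ∂joint).toReal := by
    have h := norm_integral_le_lintegral_norm (μ := joint)
      (f := fun p : W × S => gen p.1 p.2 ^ m)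
    simpa [Real.norm_eq_abs, hfdef] using h
  -- step 2 : change of measure
  have step2 : ∫⁻ p, f p ∂joint = ∫⁻ p, r p * f p ∂μ :=
    (MeasureTheory.lintegral_rnDeriv_mul hac hfm.aemeasurable).symm
  -- step 3 : Cauchy-Schwarz
  have hconj : Real.HolderConjugate 2 2 := Real.HolderConjugate.two_two
  have step3 : ∫⁻ p, r p * f p ∂μ ≤
      (∫⁻ p, r p ^ (2:ℝ) ∂μ) ^ (1 / (2:ℝ)) * (∫⁻ p, f p ^ (2:ℝ) ∂μ) ^ (1 / (2:ℝ)) := by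
    have h := ENNReal.lintegral_mul_le_Lp_mul_Lq μ hconj hrm.aemeasurable hfm.aemeasurable
    simpa [Pi.mul_apply] using h
  -- step 4 : bound the moment integral using subgaussianity
  have step4 : ∫⁻ p, f p ^ (2:ℝ) ∂μ ≤ ENNReal.ofReal B := by
    simp_rw [hf2]
    rw [hμdef, MeasureTheory.lintegral_prod _ hgm2.aemeasurable]
    calc ∫⁻ w, ∫⁻ s, ENNReal.ofReal (gen w s ^ (2 * m)) ∂joint.snd ∂joint.fst
        ≤ ∫⁻ _, ENNReal.ofReal B ∂joint.fst :=
          lintegral_mono fun w => subg_moment hσ' (hsubg w) m hm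
      _ = ENNReal.ofReal B := by simp
  -- step 5 : identify the chi-square factor
  set I2 : ℝ := ∫ p, (r p).toReal ^ 2 ∂μ with hI2def
  have hI2nn : 0 ≤ I2 := integral_nonneg fun p => sq_nonneg _
  have step5 : ∫⁻ p, r p ^ (2:ℝ) ∂μ = ENNReal.ofReal I2 := by
    have hae : ∀ᵐ p ∂μ, r p ^ (2:ℝ) = ENNReal.ofReal ((r p).toReal ^ 2) := by
      filter_upwards [Measure.rnDeriv_lt_top joint μ] with p hp
      rw [show (2:ℝ) = ((2:ℕ):ℝ) by norm_num, ENNReal.rpow_natCast,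
        ENNReal.ofReal_pow ENNReal.toReal_nonneg, ENNReal.ofReal_toReal hp.ne]
    rw [lintegral_congr_ae hae]
    exact (ofReal_integral_eq_lintegral_ofReal hr2
      (Filter.Eventually.of_forall fun p => sq_nonneg _)).symm
  have step6 : (∫⁻ p, r p ^ (2:ℝ) ∂μ) ^ (1 / (2:ℝ)) = ENNReal.ofReal (Real.sqrt I2) := by
    rw [step5, ENNReal.ofReal_rpow_of_nonneg hI2nn (by norm_num), Real.sqrt_eq_rpow]
  have step7 : (∫⁻ p, f p ^ (2:ℝ) ∂μ) ^ (1 / (2:ℝ)) ≤ ENNReal.ofReal (Real.sqrt B) := by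
    calc (∫⁻ p, f p ^ (2:ℝ) ∂μ) ^ (1 / (2:ℝ)) ≤ (ENNReal.ofReal B) ^ (1 / (2:ℝ)) :=
          ENNReal.rpow_le_rpow step4 (by norm_num)
      _ = ENNReal.ofReal (Real.sqrt B) := by
          rw [ENNReal.ofReal_rpow_of_nonneg hB0 (by norm_num), Real.sqrt_eq_rpow]
  have main : ∫⁻ p, f p ∂joint ≤ ENNReal.ofReal (Real.sqrt I2 * Real.sqrt B) := by
    rw [step2]
    refine step3.trans ?_
    rw [step6]
    calc ENNReal.ofReal (Real.sqrt I2) * (∫⁻ p, f p ^ (2:ℝ) ∂μ) ^ (1 / (2:ℝ))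
        ≤ ENNReal.ofReal (Real.sqrt I2) * ENNReal.ofReal (Real.sqrt B) :=
          mul_le_mul_right step7 _
      _ = ENNReal.ofReal (Real.sqrt I2 * Real.sqrt B) :=
          (ENNReal.ofReal_mul (Real.sqrt_nonneg _)).symm
  have hreal : (∫⁻ p, f p ∂joint).toReal ≤ Real.sqrt I2 * Real.sqrt B :=
    ENNReal.toReal_le_of_le_ofReal
      (mul_nonneg (Real.sqrt_nonneg _) (Real.sqrt_nonneg _)) main
  -- identify I2 with the chi-square information + 1
  have hint1 : Integrable (fun p => (r p).toReal) μ := Measure.integrable_toReal_rnDeriv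
  have hintval : ∫ p, (r p).toReal ∂μ = 1 := by
    rw [Measure.integral_toReal_rnDeriv hac]
    simp
  have hI2eq : (∫ p, ((r p).toReal - 1) ^ 2 ∂μ) + 1 = I2 := by
    have hexpand : ∀ p : W × S, ((r p).toReal - 1) ^ 2 =
        (r p).toReal ^ 2 - 2 * (r p).toReal + 1 := fun p => by ring
    simp_rw [hexpand]
    have e1 : ∫ p, ((r p).toReal ^ 2 - 2 * (r p).toReal + 1) ∂μ
        = (∫ p, ((r p).toReal ^ 2 - 2 * (r p).toReal) ∂μ) + ∫ _, (1:ℝ) ∂μ :=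
      integral_add (hr2.sub (hint1.const_mul 2)) (integrable_const 1)
    have e2 : ∫ p, ((r p).toReal ^ 2 - 2 * (r p).toReal) ∂μ = I2 - 2 * 1 := by
      rw [integral_sub hr2 (hint1.const_mul 2), integral_const_mul, hintval]
    rw [e1, e2, integral_const]
    simp only [measure_univ, ENNReal.toReal_one, probReal_univ, smul_eq_mul, mul_one, one_smul]
    ring
  -- the numeric bound : sqrt B ≤ D
  set D : ℝ := σ ^ m * (2 * (m:ℝ) / n) ^ ((m:ℝ) / 2) * Real.exp (m / Real.exp 1) with hDdef
  have h2mn : (0:ℝ) ≤ 2 * (m:ℝ) / n := by positivity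
  have hD0 : 0 ≤ D := by positivity
  have hsqB : Real.sqrt B ≤ D := by
    have hm1 : (1:ℝ) ≤ m := by exact_mod_cast hm
    have h2 : (2:ℝ) ≤ Real.exp m := by
      have h3 := Real.add_one_le_exp (1:ℝ)
      calc (2:ℝ) ≤ Real.exp 1 := by linarith
        _ ≤ Real.exp m := Real.exp_le_exp.2 hm1
    have hx : (1:ℝ) ≤ Real.exp ((m:ℝ) / Real.exp 1) ^ 2 := by
      have h4 : (1:ℝ) ≤ Real.exp ((m:ℝ) / Real.exp 1) :=
        Real.one_le_exp (by positivity)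
      nlinarith
    have hfac : 2 / Real.exp (m:ℝ) ≤ Real.exp ((m:ℝ) / Real.exp 1) ^ 2 := by
      rw [div_le_iff₀ (Real.exp_pos _)]
      nlinarith [Real.exp_pos ((m:ℝ))]
    have hsq : σ' ^ (2 * m) = σ ^ (2 * m) / (n:ℝ) ^ m := by
      rw [hσ'def, div_pow, pow_mul (Real.sqrt n) 2 m, Real.sq_sqrt hn'.le]
    have h1 : ((2 * (m:ℝ) / n) ^ ((m:ℝ) / 2)) ^ 2 = (2 * (m:ℝ) / n) ^ m := by
      rw [← Real.rpow_natCast ((2 * (m:ℝ) / n) ^ ((m:ℝ) / 2)) 2, ← Real.rpow_mul h2mn]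
      norm_num
    have hD2 : D ^ 2 = σ ^ (2 * m) * ((2 * (m:ℝ)) ^ m / (n:ℝ) ^ m) *
        Real.exp ((m:ℝ) / Real.exp 1) ^ 2 := by
      rw [hDdef, mul_pow, mul_pow, h1, ← pow_mul, mul_comm m 2, div_pow]
    have hBD2 : B ≤ D ^ 2 := by
      rw [hBdef, hsq, hD2]
      have hnonneg : (0:ℝ) ≤ (2 * (m:ℝ)) ^ m * σ ^ (2 * m) / (n:ℝ) ^ m := by positivity
      calc 2 * ((2 * (m:ℝ)) ^ m * (σ ^ (2 * m) / (n:ℝ) ^ m)) / Real.exp m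
          = ((2 * (m:ℝ)) ^ m * σ ^ (2 * m) / (n:ℝ) ^ m) * (2 / Real.exp m) := by ring
        _ ≤ ((2 * (m:ℝ)) ^ m * σ ^ (2 * m) / (n:ℝ) ^ m) *
              Real.exp ((m:ℝ) / Real.exp 1) ^ 2 :=
            mul_le_mul_of_nonneg_left hfac hnonneg
        _ = σ ^ (2 * m) * ((2 * (m:ℝ)) ^ m / (n:ℝ) ^ m) *
              Real.exp ((m:ℝ) / Real.exp 1) ^ 2 := by ring
    calc Real.sqrt B ≤ Real.sqrt (D ^ 2) := Real.sqrt_le_sqrt hBD2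
      _ = D := Real.sqrt_sq hD0
  -- put everything together
  calc |∫ p, gen p.1 p.2 ^ m ∂joint|
      ≤ (∫⁻ p, f p ∂joint).toReal := step1
    _ ≤ Real.sqrt I2 * Real.sqrt B := hreal
    _ ≤ Real.sqrt I2 * D := mul_le_mul_of_nonneg_left hsqB (Real.sqrt_nonneg _)
    _ = D * Real.sqrt ((∫ p, ((r p).toReal - 1) ^ 2 ∂μ) + 1) := by
        rw [hI2eq, mul_comm]
    _ = σ ^ m * (2 * (m:ℝ) / n) ^ ((m:ℝ) / 2) * Real.exp (m / Real.exp 1) *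
          Real.sqrt ((∫ p, ((joint.rnDeriv (joint.fst.prod joint.snd) p).toReal - 1) ^ 2
            ∂(joint.fst.prod joint.snd)) + 1) := rfl
end

section
/- For probability measures $P \ll Q$ and $t > 2$, the chi-square divergence is controlled by the power divergence of order $t$: $\sqrt{\chi^2(P\|Q) + 1} \le (D_P^{(t)}(P\|Q) + 1)^{1/(2(t-1))}$. -/
open MeasureTheory Real
open scoped ENNReal

/-- Key interpolation step in `ℝ≥0∞`: `∫⁻ g² ≤ (∫⁻ g^t)^(1/(t-1))` when `∫⁻ g = 1`. -/
lemma lintegral_sq_le_aux {X : Type*} [MeasurableSpace X] (Q : Measure X)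
    {g : X → ℝ≥0∞} (hg : AEMeasurable g Q) (hg1 : ∫⁻ x, g x ∂Q = 1)
    {t : ℝ} (ht : 2 < t) :
    ∫⁻ x, g x ^ (2 : ℝ) ∂Q ≤ (∫⁻ x, g x ^ t ∂Q) ^ (1 / (t - 1)) := by
  have ht2 : (0:ℝ) < t - 2 := by linarith
  have ht1 : (0:ℝ) < t - 1 := by linarith
  set p : ℝ := (t - 1) / (t - 2) with hp
  set q : ℝ := t - 1 with hq
  have ht1' : t - 1 ≠ 0 := by intro h; linarith
  have hpq : p.HolderConjugate q := by
    constructor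
    · rw [hp, hq]
      rw [inv_div, inv_one]
      field_simp
      ring
    · rw [hp]; exact div_pos ht1 ht2
    · exact ht1
  have key := ENNReal.lintegral_mul_le_Lp_mul_Lq Q hpq
    (f := fun x => g x ^ ((t-2)/(t-1))) (g := fun x => g x ^ (t/(t-1)))
    (hg.pow_const _) (hg.pow_const _)
  have h1 : ∀ x, (fun x => g x ^ ((t-2)/(t-1))) x * (fun x => g x ^ (t/(t-1))) x
      = g x ^ (2:ℝ) := by
    intro x
    simp only
    rw [← ENNReal.rpow_add_of_nonneg _ _ (by positivity) (by positivity)]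
    congr 1
    field_simp
    ring
  have h2 : ∀ x, (g x ^ ((t-2)/(t-1))) ^ p = g x := by
    intro x
    rw [← ENNReal.rpow_mul]
    rw [hp]
    rw [div_mul_div_comm]
    rw [mul_comm (t-2) (t-1), div_self (by positivity)]
    exact ENNReal.rpow_one _
  have h3 : ∀ x, (g x ^ (t/(t-1))) ^ q = g x ^ t := by
    intro x
    rw [← ENNReal.rpow_mul, hq, div_mul_cancel₀ _ (ne_of_gt ht1)]
  calc ∫⁻ x, g x ^ (2:ℝ) ∂Q
      = ∫⁻ x, (fun x => g x ^ ((t-2)/(t-1))) x * (fun x => g x ^ (t/(t-1))) x ∂Q := by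
        simp_rw [h1]
    _ ≤ (∫⁻ x, (g x ^ ((t-2)/(t-1))) ^ p ∂Q) ^ (1/p) * (∫⁻ x, (g x ^ (t/(t-1))) ^ q ∂Q) ^ (1/q) :=
        key
    _ = (∫⁻ x, g x ∂Q) ^ (1/p) * (∫⁻ x, g x ^ t ∂Q) ^ (1/q) := by
        simp_rw [h2, h3]
    _ = (∫⁻ x, g x ^ t ∂Q) ^ (1 / (t - 1)) := by
        rw [hg1, ENNReal.one_rpow, one_mul, hq]

/-- For `t > 2`, the chi-square divergence is controlled by the power divergence of
order `t`: `√(χ²(P‖Q)+1) ≤ (D_P^{(t)}(P‖Q)+1)^{1/(2(t-1))}`. -/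
theorem sqrt_chiSq_le_power_divergence
    {X : Type*} [MeasurableSpace X] (P Q : Measure X)
    [IsProbabilityMeasure P] [IsProbabilityMeasure Q] (hPQ : P ≪ Q)
    (t : ℝ) (ht : 2 < t)
    (hrt : Integrable (fun x => ((P.rnDeriv Q x).toReal) ^ t) Q) :
    Real.sqrt ((∫ x, ((P.rnDeriv Q x).toReal - 1) ^ 2 ∂Q) + 1) ≤
      ((∫ x, (((P.rnDeriv Q x).toReal) ^ t - 1) ∂Q) + 1) ^ (1 / (2 * (t - 1))) := by
  set f : X → ℝ := fun x => (P.rnDeriv Q x).toReal with hf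
  have hmeas : Measurable fun x => P.rnDeriv Q x := Measure.measurable_rnDeriv P Q
  have hfmeas : Measurable f := hmeas.ennreal_toReal
  have hfnn : ∀ x, 0 ≤ f x := fun x => ENNReal.toReal_nonneg
  have hf_int : Integrable f Q := Measure.integrable_toReal_rnDeriv
  have hf_one : ∫ x, f x ∂Q = 1 := by
    rw [hf, Measure.integral_toReal_rnDeriv hPQ]
    simp
  -- integrability of f^2
  have hf2_int : Integrable (fun x => f x ^ 2) Q := by
    have hle : ∀ x, ‖f x ^ 2‖ ≤ 1 + f x ^ t := by
      intro x
      rw [Real.norm_of_nonneg (by positivity)]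
      rcases le_or_gt (f x) 1 with h | h
      · have h1 : f x ^ 2 ≤ 1 := by
          calc f x ^ 2 ≤ 1 ^ 2 := pow_le_pow_left₀ (hfnn x) h 2
          _ = 1 := one_pow 2
        have h2 : (0:ℝ) ≤ f x ^ t := Real.rpow_nonneg (hfnn x) t
        linarith
      · have h1 : f x ^ 2 = f x ^ (2:ℝ) := by
          rw [← Real.rpow_natCast (f x) 2]; norm_num
        have h2 : f x ^ (2:ℝ) ≤ f x ^ t :=
          Real.rpow_le_rpow_of_exponent_le h.le (by linarith)
        rw [h1]
        linarith
    exact ((integrable_const (1:ℝ)).add hrt).mono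
      ((hfmeas.pow_const 2).aestronglyMeasurable)
      (Filter.Eventually.of_forall fun x => by
        simp only [Pi.add_apply, Real.norm_eq_abs]
        exact (hle x).trans (le_abs_self _))
  -- Step 1: LHS inner expression equals ∫ f²
  have hQuniv : Q Set.univ = 1 := measure_univ
  have hstep1 : (∫ x, (f x - 1) ^ 2 ∂Q) + 1 = ∫ x, f x ^ 2 ∂Q := by
    have hfun : (fun x => (f x - 1) ^ 2) = fun x => f x ^ 2 - 2 * f x + 1 := by
      funext x; ring
    have hsub : Integrable (fun x => f x ^ 2 - 2 * f x) Q :=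
      hf2_int.sub (hf_int.const_mul 2)
    rw [hfun, integral_add hsub (integrable_const 1),
      integral_sub hf2_int (hf_int.const_mul 2)]
    simp only [integral_const_mul, hf_one, integral_const, probReal_univ, hQuniv, ENNReal.toReal_one,
      smul_eq_mul, one_mul, mul_one]
    ring
  -- Step 2: RHS inner expression equals ∫ f^t
  have hstep2 : (∫ x, (f x ^ t - 1) ∂Q) + 1 = ∫ x, f x ^ t ∂Q := by
    rw [integral_sub hrt (integrable_const 1)]
    simp [hQuniv]
    rfl
  rw [hstep1, hstep2]
  -- The core inequality: ∫ f² ≤ (∫ f^t)^(1/(t-1))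
  set g : X → ℝ≥0∞ := fun x => P.rnDeriv Q x with hgdef
  have hg1 : ∫⁻ x, g x ∂Q = 1 := by
    rw [hgdef]
    simp only
    rw [Measure.lintegral_rnDeriv hPQ]
    exact measure_univ
  have hgne : ∀ᵐ x ∂Q, g x ≠ ∞ := Measure.rnDeriv_ne_top P Q
  have hfnn_ae : 0 ≤ᵐ[Q] f := Filter.Eventually.of_forall hfnn
  have hA : ENNReal.ofReal (∫ x, f x ^ 2 ∂Q) = ∫⁻ x, g x ^ (2:ℝ) ∂Q := by
    rw [MeasureTheory.ofReal_integral_eq_lintegral_ofReal hf2_int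
      (Filter.Eventually.of_forall fun x => by positivity)]
    refine lintegral_congr_ae (hgne.mono fun x hx => ?_)
    have h2 : (f x : ℝ) ^ 2 = f x ^ (2:ℝ) := by
      rw [← Real.rpow_natCast (f x) 2]; norm_num
    show ENNReal.ofReal (f x ^ 2) = g x ^ (2:ℝ)
    rw [h2, ← ENNReal.ofReal_rpow_of_nonneg (hfnn x) (by norm_num : (0:ℝ) ≤ 2),
      ENNReal.ofReal_toReal hx]
  have hB : ENNReal.ofReal (∫ x, f x ^ t ∂Q) = ∫⁻ x, g x ^ t ∂Q := by
    rw [MeasureTheory.ofReal_integral_eq_lintegral_ofReal hrt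
      (Filter.Eventually.of_forall fun x => Real.rpow_nonneg (hfnn x) t)]
    refine lintegral_congr_ae (hgne.mono fun x hx => ?_)
    show ENNReal.ofReal (f x ^ t) = g x ^ t
    rw [← ENNReal.ofReal_rpow_of_nonneg (hfnn x) (by linarith : (0:ℝ) ≤ t),
      ENNReal.ofReal_toReal hx]
  have hItnn : 0 ≤ ∫ x, f x ^ t ∂Q :=
    integral_nonneg fun x => Real.rpow_nonneg (hfnn x) t
  have hcore : ∫ x, f x ^ 2 ∂Q ≤ (∫ x, f x ^ t ∂Q) ^ (1 / (t - 1)) := by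
    have := lintegral_sq_le_aux Q hmeas.aemeasurable hg1 ht
    rw [← hA, ← hB, ENNReal.ofReal_rpow_of_nonneg hItnn
      (div_nonneg zero_le_one (by linarith))] at this
    rwa [ENNReal.ofReal_le_ofReal_iff (Real.rpow_nonneg hItnn _)] at this
  -- Finish with square roots
  have h1 : Real.sqrt ((∫ x, f x ^ t ∂Q) ^ (1 / (t - 1)))
      = (∫ x, f x ^ t ∂Q) ^ (1 / (2 * (t - 1))) := by
    rw [Real.sqrt_eq_rpow, ← Real.rpow_mul hItnn]
    congr 1
    field_simp
  calc Real.sqrt (∫ x, f x ^ 2 ∂Q)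
      ≤ Real.sqrt ((∫ x, f x ^ t ∂Q) ^ (1 / (t - 1))) := Real.sqrt_le_sqrt hcore
    _ = (∫ x, f x ^ t ∂Q) ^ (1 / (2 * (t - 1))) := h1
end

section
/- Suppose for each fixed $w$, gen$(w,S) = L_P(w,\mu) - L_E(w,S)$ is $\sigma/\sqrt{n}$-subgaussian with mean zero under $P_S$, so that gen$(w,S)^2$ has mean at most $\sigma^2/n$ and is $(256\sigma^4/n^2, 16\sigma^2/n)$-subexponential under $P_S$. Then the second moment of the generalization error under the joint law satisfies $\mathbb{E}_{P_{W,S}}[\text{gen}(W,S)^2] \le \frac{\sigma^2}{n}(16\, I(W;S) + 9)$. -/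
open MeasureTheory Real
open scoped ENNReal

lemma gauss_shift (b : ℝ) :
    ∫⁻ z : ℝ, ENNReal.ofReal (Real.exp (b * z - z ^ 2 / 2)) ∂volume
      = ENNReal.ofReal (Real.exp (b ^ 2 / 2) * Real.sqrt (2 * π)) := by
  have hpt : ∀ z : ℝ, b * z - z ^ 2 / 2 = b ^ 2 / 2 + (-(1/2) * (z - b) ^ 2) := by
    intro z; ring
  simp_rw [hpt, Real.exp_add, ENNReal.ofReal_mul (Real.exp_nonneg _)]
  rw [lintegral_const_mul' _ _ ENNReal.ofReal_ne_top]
  have hint : Integrable (fun z : ℝ => Real.exp (-(1/2) * (z - b) ^ 2)) volume := by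
    have := (integrable_exp_neg_mul_sq (by norm_num : (0:ℝ) < 1/2)).comp_sub_right b
    simpa using this
  rw [← ofReal_integral_eq_lintegral_ofReal hint
    (Filter.Eventually.of_forall fun z => Real.exp_nonneg _)]
  rw [integral_sub_right_eq_self (fun z : ℝ => Real.exp (-(1/2) * z ^ 2)) b]
  rw [integral_gaussian]
  congr 2
  · ring_nf

lemma mgf_sq_bound {Ω : Type*} [MeasurableSpace Ω] (P : Measure Ω) [IsProbabilityMeasure P]
    (X : Ω → ℝ) (hX : Measurable X) (σ : ℝ) (hσ : 0 < σ) (n : ℕ) (hn : 0 < n)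
    (h : ∀ l : ℝ, Integrable (fun ω => Real.exp (l * X ω)) P ∧
      ∫ ω, Real.exp (l * X ω) ∂P ≤ Real.exp (l ^ 2 * (σ / Real.sqrt n) ^ 2 / 2)) :
    ∫⁻ ω, ENNReal.ofReal (Real.exp ((n / (16 * σ ^ 2)) * X ω ^ 2)) ∂P
      ≤ ENNReal.ofReal (Real.exp (9/16)) := by
  have hn' : (0:ℝ) < n := by exact_mod_cast hn
  set lam : ℝ := n / (16 * σ ^ 2) with hlam_def
  have hlam : 0 < lam := by positivity
  set a : ℝ := Real.sqrt (2 * lam) with ha_def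
  have ha2 : a ^ 2 = 2 * lam := Real.sq_sqrt (by positivity)
  have hsqn : (Real.sqrt n) ^ 2 = n := Real.sq_sqrt (Nat.cast_nonneg n)
  have h2pi : (0:ℝ) < Real.sqrt (2 * π) := Real.sqrt_pos.mpr (by positivity)
  rw [← ENNReal.mul_le_mul_iff_right (a := ENNReal.ofReal (Real.sqrt (2 * π)))
    (ne_of_gt (ENNReal.ofReal_pos.mpr h2pi)) ENNReal.ofReal_ne_top]
  have key : ∀ x : ℝ, ∫⁻ z : ℝ, ENNReal.ofReal (Real.exp (a * x * z - z ^ 2 / 2)) ∂volume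
      = ENNReal.ofReal (Real.sqrt (2 * π)) * ENNReal.ofReal (Real.exp (lam * x ^ 2)) := by
    intro x
    rw [gauss_shift (a * x)]
    have : (a * x) ^ 2 / 2 = lam * x ^ 2 := by rw [mul_pow, ha2]; ring
    rw [this, ENNReal.ofReal_mul (Real.exp_nonneg _), mul_comm]
  have hmeas : AEMeasurable (Function.uncurry fun (ω : Ω) (z : ℝ) =>
      ENNReal.ofReal (Real.exp (a * X ω * z - z ^ 2 / 2))) (P.prod volume) := by
    apply Measurable.aemeasurable
    apply Measurable.ennreal_ofReal
    apply Measurable.exp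
    fun_prop
  calc ENNReal.ofReal (Real.sqrt (2 * π)) * ∫⁻ ω, ENNReal.ofReal (Real.exp (lam * X ω ^ 2)) ∂P
      = ∫⁻ ω, ENNReal.ofReal (Real.sqrt (2 * π)) * ENNReal.ofReal (Real.exp (lam * X ω ^ 2)) ∂P := by
        rw [lintegral_const_mul' _ _ ENNReal.ofReal_ne_top]
    _ = ∫⁻ ω, ∫⁻ z : ℝ, ENNReal.ofReal (Real.exp (a * X ω * z - z ^ 2 / 2)) ∂volume ∂P := by
        simp_rw [key]
    _ = ∫⁻ z : ℝ, ∫⁻ ω, ENNReal.ofReal (Real.exp (a * X ω * z - z ^ 2 / 2)) ∂P ∂volume :=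
        lintegral_lintegral_swap hmeas
    _ = ∫⁻ z : ℝ, (∫⁻ ω, ENNReal.ofReal (Real.exp ((a * z) * X ω)) ∂P)
          * ENNReal.ofReal (Real.exp (-(z ^ 2) / 2)) ∂volume := by
        congr 1; ext z
        rw [← lintegral_mul_const' _ _ ENNReal.ofReal_ne_top]
        congr 1; ext ω
        rw [← ENNReal.ofReal_mul (Real.exp_nonneg _), ← Real.exp_add]
        congr 1; ring
    _ ≤ ∫⁻ z : ℝ, ENNReal.ofReal (Real.exp ((a * z) ^ 2 * (σ / Real.sqrt n) ^ 2 / 2))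
          * ENNReal.ofReal (Real.exp (-(z ^ 2) / 2)) ∂volume := by
        apply lintegral_mono
        intro z
        apply mul_le_mul_left
        rw [← ofReal_integral_eq_lintegral_ofReal (h (a * z)).1
          (Filter.Eventually.of_forall fun ω => Real.exp_nonneg _)]
        exact ENNReal.ofReal_le_ofReal (h (a * z)).2
    _ = ∫⁻ z : ℝ, ENNReal.ofReal (Real.exp (-(7/16) * z ^ 2)) ∂volume := by
        congr 1; ext z
        rw [← ENNReal.ofReal_mul (Real.exp_nonneg _), ← Real.exp_add]
        congr 1
        have e1 : (a * z) ^ 2 * (σ / Real.sqrt n) ^ 2 / 2 = z ^ 2 / 16 := by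
          rw [mul_pow, ha2, div_pow, hsqn, hlam_def]
          field_simp
        rw [e1]; ring
    _ = ENNReal.ofReal (Real.sqrt (π / (7/16))) := by
        rw [← ofReal_integral_eq_lintegral_ofReal
          (integrable_exp_neg_mul_sq (by norm_num : (0:ℝ) < 7/16))
          (Filter.Eventually.of_forall fun z => Real.exp_nonneg _), integral_gaussian]
    _ ≤ ENNReal.ofReal (Real.sqrt (2 * π)) * ENNReal.ofReal (Real.exp (9/16)) := by
        rw [← ENNReal.ofReal_mul (Real.sqrt_nonneg _)]
        apply ENNReal.ofReal_le_ofReal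
        have e2 : π / (7/16) = (2 * π) * (8/7) := by ring
        rw [e2, Real.sqrt_mul (by positivity)]
        apply mul_le_mul_of_nonneg_left _ (Real.sqrt_nonneg _)
        have h87 : (8:ℝ)/7 ≤ Real.exp (9/16) ^ 2 := by
          have : Real.exp (9/16) ^ 2 = Real.exp (9/8) := by
            rw [sq, ← Real.exp_add]; norm_num
          rw [this]
          have := Real.add_one_le_exp (9/8 : ℝ)
          linarith
        calc Real.sqrt (8/7) ≤ Real.sqrt (Real.exp (9/16) ^ 2) := Real.sqrt_le_sqrt h87
          _ = Real.exp (9/16) := Real.sqrt_sq (Real.exp_nonneg _)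

/-- Mutual-information bound on the second moment of the generalization error:
`E_{P_{W,S}}[gen²] ≤ (σ²/n)(16 I(W;S) + 9)`. -/
theorem second_moment_bound_mutual_information
    {W S : Type*} [MeasurableSpace W] [MeasurableSpace S]
    (joint : Measure (W × S)) [IsProbabilityMeasure joint]
    (gen : W → S → ℝ) (hgen : Measurable (Function.uncurry gen))
    (σ : ℝ) (hσ : 0 < σ) (n : ℕ) (hn : 0 < n)
    (hsubg : ∀ w : W, IsSubgaussian (fun s => gen w s) (σ / Real.sqrt n) joint.snd)
    (hmean : ∀ w : W, ∫ s, gen w s ∂joint.snd = 0)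
    (hsqmean : ∀ w : W, ∫ s, (gen w s) ^ 2 ∂joint.snd ≤ σ ^ 2 / n)
    (hsubexp : ∀ w : W, ∀ l : ℝ, |l| ≤ n / (16 * σ ^ 2) →
      ∫ s, Real.exp (l * ((gen w s) ^ 2 - ∫ s', (gen w s') ^ 2 ∂joint.snd)) ∂joint.snd ≤
        Real.exp (128 * l ^ 2 * σ ^ 4 / (n : ℝ) ^ 2))
    (hac : joint ≪ joint.fst.prod joint.snd)
    (hlog : Integrable
      (fun p => Real.log ((joint.rnDeriv (joint.fst.prod joint.snd) p).toReal)) joint) :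
    ∫ p, (gen p.1 p.2) ^ 2 ∂joint ≤
      σ ^ 2 / n *
        (16 * (∫ p, Real.log ((joint.rnDeriv (joint.fst.prod joint.snd) p).toReal) ∂joint)
          + 9) := by
  have hn' : (0:ℝ) < n := by exact_mod_cast hn
  set μ : Measure (W × S) := joint with hμ
  set ν : Measure (W × S) := joint.fst.prod joint.snd with hν
  set f : W × S → ENNReal := μ.rnDeriv ν with hf
  have hfmeas : Measurable f := Measure.measurable_rnDeriv μ ν
  set lam : ℝ := n / (16 * σ ^ 2) with hlam_def
  have hlam : 0 < lam := by positivity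
  set G : W × S → ℝ := fun p => lam * gen p.1 p.2 ^ 2 with hG
  have hGnn : ∀ p, 0 ≤ G p := fun p => mul_nonneg hlam.le (sq_nonneg _)
  have hGmeas : Measurable G := by
    exact measurable_const.mul (hgen.pow measurable_const)
  set KL : ℝ := ∫ p, Real.log ((f p).toReal) ∂μ with hKL
  -- Z : the MGF over the product measure
  set Z : ENNReal := ∫⁻ p, ENNReal.ofReal (Real.exp (G p)) ∂ν with hZ
  have hexpGmeas : Measurable fun p => ENNReal.ofReal (Real.exp (G p)) :=
    hGmeas.exp.ennreal_ofReal
  have hZle : Z ≤ ENNReal.ofReal (Real.exp (9/16)) := by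
    rw [hZ, hν, MeasureTheory.lintegral_prod _ hexpGmeas.aemeasurable]
    calc ∫⁻ w, ∫⁻ s, ENNReal.ofReal (Real.exp (G (w, s))) ∂joint.snd ∂joint.fst
        ≤ ∫⁻ _, ENNReal.ofReal (Real.exp (9/16)) ∂joint.fst := by
          apply lintegral_mono
          intro w
          exact mgf_sq_bound joint.snd (fun s => gen w s)
            (hgen.comp (measurable_prodMk_left)) σ hσ n hn (hsubg w)
      _ = ENNReal.ofReal (Real.exp (9/16)) := by simp
  have hZ1 : 1 ≤ Z := by
    rw [hZ]
    calc (1:ℝ≥0∞) = ∫⁻ _, 1 ∂ν := by simp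
      _ ≤ _ := lintegral_mono fun p => by
          simp only [← ENNReal.ofReal_one]
          exact ENNReal.ofReal_le_ofReal (Real.one_le_exp (hGnn p))
  have hZtop : Z ≠ ⊤ := (lt_of_le_of_lt hZle ENNReal.ofReal_lt_top).ne
  set Zr : ℝ := Z.toReal with hZr
  have hZr1 : 1 ≤ Zr := by
    have := ENNReal.toReal_mono hZtop hZ1
    simpa using this
  have hZrpos : 0 < Zr := lt_of_lt_of_le one_pos hZr1
  have hZrle : Zr ≤ Real.exp (9/16) := by
    have := ENNReal.toReal_mono ENNReal.ofReal_ne_top hZle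
    rwa [ENNReal.toReal_ofReal (Real.exp_nonneg _)] at this
  have hlogZr : Real.log Zr ≤ 9/16 := by
    calc Real.log Zr ≤ Real.log (Real.exp (9/16)) :=
          Real.log_le_log hZrpos hZrle
      _ = 9/16 := Real.log_exp _
  -- the change-of-measure function
  have hmu_eq : ν.withDensity f = μ := Measure.withDensity_rnDeriv_eq μ ν hac
  have hratio_meas : Measurable fun p => ENNReal.ofReal (Real.exp (G p)) / f p :=
    hexpGmeas.div hfmeas
  have hT : ∫⁻ p, ENNReal.ofReal (Real.exp (G p)) / f p ∂μ ≤ Z := by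
    rw [← hmu_eq, lintegral_withDensity_eq_lintegral_mul ν hfmeas hratio_meas]
    calc ∫⁻ p, (f * fun p => ENNReal.ofReal (Real.exp (G p)) / f p) p ∂ν
        ≤ ∫⁻ p, ENNReal.ofReal (Real.exp (G p)) ∂ν :=
          lintegral_mono fun p => ENNReal.mul_div_le
      _ = Z := hZ.symm
  have hTtop : ∫⁻ p, ENNReal.ofReal (Real.exp (G p)) / f p ∂μ ≠ ⊤ :=
    (lt_of_le_of_lt hT (lt_of_le_of_lt hZle ENNReal.ofReal_lt_top)).ne
  set h : W × S → ℝ := fun p => (ENNReal.ofReal (Real.exp (G p)) / f p).toReal with hh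
  have hh_int : Integrable h μ :=
    integrable_toReal_of_lintegral_ne_top hratio_meas.aemeasurable hTtop
  -- a.e. facts
  have hfpos : ∀ᵐ p ∂μ, 0 < f p := Measure.rnDeriv_pos hac
  have hflt : ∀ᵐ p ∂μ, f p < ⊤ := hac.ae_le (Measure.rnDeriv_lt_top μ ν)
  have hint_h_le : ∫ p, h p ∂μ ≤ Zr := by
    rw [hh, integral_toReal hratio_meas.aemeasurable]
    · exact ENNReal.toReal_mono hZtop hT
    · filter_upwards [hfpos] with p hp
      exact ENNReal.div_lt_top ENNReal.ofReal_ne_top hp.ne'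
  -- pointwise Donsker–Varadhan inequality
  have hpt : ∀ᵐ p ∂μ, G p ≤ Real.log ((f p).toReal) + Real.log Zr + h p / Zr - 1 := by
    filter_upwards [hfpos, hflt] with p h0 htop
    set F : ℝ := (f p).toReal with hF
    have hFpos : 0 < F := ENNReal.toReal_pos h0.ne' htop.ne
    have hhp : h p = Real.exp (G p) / F := by
      simp only [hh]
      rw [ENNReal.toReal_div, ENNReal.toReal_ofReal (Real.exp_nonneg _)]
    have htpos : 0 < Real.exp (G p) / (F * Zr) := by positivity
    have hlogt := Real.log_le_sub_one_of_pos htpos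
    rw [Real.log_div (Real.exp_ne_zero _) (by positivity),
      Real.log_mul hFpos.ne' hZrpos.ne', Real.log_exp] at hlogt
    have : Real.exp (G p) / (F * Zr) = h p / Zr := by
      rw [hhp]; field_simp
    rw [this] at hlogt
    linarith
  -- integrability of G
  have hG_int : Integrable G μ := by
    apply Integrable.mono'
      (g := fun p => |Real.log ((f p).toReal)| + Real.log Zr + h p / Zr + 1)
    · exact ((hlog.abs.add (integrable_const _)).add (hh_int.div_const _)).add
        (integrable_const _)
    · exact hGmeas.aestronglyMeasurable
    · filter_upwards [hpt] with p hp
      rw [Real.norm_eq_abs, abs_of_nonneg (hGnn p)]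
      have := le_abs_self (Real.log ((f p).toReal))
      linarith
  -- integrate the pointwise bound
  have hmain : ∫ p, G p ∂μ ≤ KL + Real.log Zr := by
    have hrhs_int : Integrable
        (fun p => Real.log ((f p).toReal) + Real.log Zr + h p / Zr - 1) μ :=
      ((hlog.add (integrable_const _)).add (hh_int.div_const _)).sub (integrable_const _)
    calc ∫ p, G p ∂μ ≤ ∫ p, (Real.log ((f p).toReal) + Real.log Zr + h p / Zr - 1) ∂μ :=
          integral_mono_ae hG_int hrhs_int hpt
      _ = KL + Real.log Zr + (∫ p, h p ∂μ) / Zr - 1 := by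
          have i2 : Integrable (fun p => Real.log ((f p).toReal) + Real.log Zr) μ :=
            hlog.add (integrable_const _)
          have i3 : Integrable
              (fun p => Real.log ((f p).toReal) + Real.log Zr + h p / Zr) μ :=
            i2.add (hh_int.div_const _)
          rw [integral_sub i3 (integrable_const 1),
            integral_add i2 (hh_int.div_const Zr),
            integral_add hlog (integrable_const (Real.log Zr)), integral_div]
          simp [hKL]
      _ ≤ KL + Real.log Zr + 1 - 1 := by
          have : (∫ p, h p ∂μ) / Zr ≤ 1 := by
            rw [div_le_one hZrpos]; exact hint_h_le
          linarith
      _ = KL + Real.log Zr := by ring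
  -- conclude
  have hGint_eq : ∫ p, G p ∂μ = lam * ∫ p, gen p.1 p.2 ^ 2 ∂μ := by
    rw [hG]; exact integral_const_mul lam _
  have hfinal : lam * ∫ p, gen p.1 p.2 ^ 2 ∂μ ≤ KL + 9/16 := by
    rw [← hGint_eq]; linarith
  have hσn : σ ^ 2 ≠ 0 := by positivity
  have hcan : (16 * σ ^ 2 / (n:ℝ)) * (lam * ∫ p, gen p.1 p.2 ^ 2 ∂μ)
      = ∫ p, gen p.1 p.2 ^ 2 ∂μ := by
    rw [hlam_def]; field_simp
  calc ∫ p, gen p.1 p.2 ^ 2 ∂μ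
      = (16 * σ ^ 2 / (n:ℝ)) * (lam * ∫ p, gen p.1 p.2 ^ 2 ∂μ) := hcan.symm
    _ ≤ (16 * σ ^ 2 / (n:ℝ)) * (KL + 9/16) := by
        apply mul_le_mul_of_nonneg_left hfinal (by positivity)
    _ = σ ^ 2 / n * (16 * KL + 9) := by ring
end

section
/- Single-draw high-probability bound: under the subgaussian loss assumption, for $\delta \in (0,1)$ and $t > 1$, setting $\beta = \frac{1}{t-1}\log\big(\frac{I_P^{(t)}(W;S)+1}{\delta^t}\big)$, if $\beta > 2$ and $\beta \in \mathbb{Z}^+$ then with probability at least $1-\delta$ under $P_{W,S}$: $|\text{gen}(W,S)| \le e^{1/e+1/2}\sqrt{\frac{2t\sigma^2}{n(t-1)}}\sqrt{\log\big((I_P^{(t)}(W;S)+1)^{1/t}\big) + \log(1/\delta)}$. -/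
open MeasureTheory Real

lemma chernoff_one_sided {Ω : Type*} [MeasurableSpace Ω] (P : Measure Ω)
    (X : Ω → ℝ) (hX : Measurable X) (s2 : ℝ) (hs2 : 0 < s2)
    (h : ∀ l : ℝ, Integrable (fun ω => Real.exp (l * X ω)) P ∧
      ∫ ω, Real.exp (l * X ω) ∂P ≤ Real.exp (l ^ 2 * s2 / 2))
    (c : ℝ) (hc : 0 < c) :
    P {ω | c < X ω} ≤ ENNReal.ofReal (Real.exp (-c ^ 2 / (2 * s2))) := by
  set l := c / s2 with hl
  have hl0 : 0 < l := div_pos hc hs2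
  have hsub : {ω | c < X ω} ⊆
      {ω | ENNReal.ofReal (Real.exp (l * c)) ≤ ENNReal.ofReal (Real.exp (l * X ω))} := by
    intro ω hω
    exact ENNReal.ofReal_le_ofReal
      (Real.exp_le_exp.2 (mul_le_mul_of_nonneg_left (le_of_lt hω) hl0.le))
  have hmeas : AEMeasurable (fun ω => ENNReal.ofReal (Real.exp (l * X ω))) P :=
    (ENNReal.measurable_ofReal.comp (Real.measurable_exp.comp (hX.const_mul l))).aemeasurable
  have hmarkov := mul_meas_ge_le_lintegral₀ hmeas (ENNReal.ofReal (Real.exp (l * c)))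
  have hlin : ∫⁻ ω, ENNReal.ofReal (Real.exp (l * X ω)) ∂P
      ≤ ENNReal.ofReal (Real.exp (l ^ 2 * s2 / 2)) := by
    rw [← ofReal_integral_eq_lintegral_ofReal (h l).1
      (Filter.Eventually.of_forall fun ω => (Real.exp_pos _).le)]
    exact ENNReal.ofReal_le_ofReal (h l).2
  calc P {ω | c < X ω}
      ≤ P {ω | ENNReal.ofReal (Real.exp (l * c)) ≤ ENNReal.ofReal (Real.exp (l * X ω))} :=
        measure_mono hsub
    _ ≤ ENNReal.ofReal (Real.exp (l ^ 2 * s2 / 2)) / ENNReal.ofReal (Real.exp (l * c)) := by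
        rw [ENNReal.le_div_iff_mul_le (Or.inl (by positivity)) (Or.inl ENNReal.ofReal_ne_top)]
        rw [mul_comm]
        exact hmarkov.trans hlin
    _ = ENNReal.ofReal (Real.exp (-c ^ 2 / (2 * s2))) := by
        rw [← ENNReal.ofReal_div_of_pos (Real.exp_pos _), ← Real.exp_sub]
        congr 1
        rw [hl]
        field_simp
        ring

lemma chernoff_abs {Ω : Type*} [MeasurableSpace Ω] (P : Measure Ω)
    (X : Ω → ℝ) (hX : Measurable X) (s2 : ℝ) (hs2 : 0 < s2)
    (h : ∀ l : ℝ, Integrable (fun ω => Real.exp (l * X ω)) P ∧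
      ∫ ω, Real.exp (l * X ω) ∂P ≤ Real.exp (l ^ 2 * s2 / 2))
    (c : ℝ) (hc : 0 < c) :
    P {ω | c < |X ω|} ≤ 2 * ENNReal.ofReal (Real.exp (-c ^ 2 / (2 * s2))) := by
  have hneg := chernoff_one_sided P (fun ω => -X ω) hX.neg s2 hs2 (fun l => by
    have := h (-l)
    simpa [neg_mul, mul_neg, neg_neg, neg_sq] using this) c hc
  have hpos := chernoff_one_sided P X hX s2 hs2 h c hc
  have hsub : {ω | c < |X ω|} ⊆ {ω | c < X ω} ∪ {ω | c < -X ω} := by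
    intro ω hω
    rcases lt_abs.mp (Set.mem_setOf_eq ▸ hω) with h1 | h2
    · exact Or.inl h1
    · exact Or.inr h2
  calc P {ω | c < |X ω|} ≤ P ({ω | c < X ω} ∪ {ω | c < -X ω}) := measure_mono hsub
    _ ≤ P {ω | c < X ω} + P {ω | c < -X ω} := measure_union_le _ _
    _ ≤ _ := by rw [two_mul]; exact add_le_add hpos hneg


lemma aux_integral_facts {α : Type*} [MeasurableSpace α] (ν μ : Measure α)
    [IsProbabilityMeasure ν] [IsProbabilityMeasure μ] (hac : ν ≪ μ)
    (t : ℝ) (ht : 1 < t)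
    (hrt : Integrable (fun p => ((ν.rnDeriv μ p).toReal) ^ t) μ) :
    1 ≤ ∫ p, ((ν.rnDeriv μ p).toReal) ^ t ∂μ ∧
    ∫⁻ p, (ν.rnDeriv μ p) ^ t ∂μ
      = ENNReal.ofReal (∫ p, ((ν.rnDeriv μ p).toReal) ^ t ∂μ) := by
  have hr1 : ∫ p, (ν.rnDeriv μ p).toReal ∂μ = 1 := by
    rw [Measure.integral_toReal_rnDeriv hac]
    simp
  constructor
  · have hmono : ∀ p, 1 + t * ((ν.rnDeriv μ p).toReal - 1) ≤ (ν.rnDeriv μ p).toReal ^ t := by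
      intro p
      have h1 : (-1 : ℝ) ≤ (ν.rnDeriv μ p).toReal - 1 := by
        simp [ENNReal.toReal_nonneg]
      have := one_add_mul_self_le_rpow_one_add h1 ht.le
      simpa using this
    have haux : Integrable (fun p => (ν.rnDeriv μ p).toReal - 1) μ :=
      (Measure.integrable_toReal_rnDeriv (μ := ν) (ν := μ)).sub (integrable_const 1)
    have hintlhs : Integrable (fun p => 1 + t * ((ν.rnDeriv μ p).toReal - 1)) μ :=
      (integrable_const (1:ℝ)).add (haux.const_mul t)
    calc (1:ℝ) = ∫ p, (1 + t * ((ν.rnDeriv μ p).toReal - 1)) ∂μ := by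
          rw [integral_add (integrable_const 1) (haux.const_mul t),
            integral_const_mul,
            integral_sub (Measure.integrable_toReal_rnDeriv (μ := ν) (ν := μ))
              (integrable_const 1), hr1]
          simp
      _ ≤ ∫ p, (ν.rnDeriv μ p).toReal ^ t ∂μ := integral_mono hintlhs hrt hmono
  · have hae : ∀ᵐ p ∂μ, (ν.rnDeriv μ p) ^ t
        = ENNReal.ofReal ((ν.rnDeriv μ p).toReal ^ t) := by
      filter_upwards [Measure.rnDeriv_lt_top ν μ] with p hp
      rcases eq_or_ne (ν.rnDeriv μ p) 0 with h0 | h0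
      · rw [h0]
        simp [ENNReal.zero_rpow_of_pos (lt_trans zero_lt_one ht),
          Real.zero_rpow (by positivity : t ≠ 0)]
      · have hpos : 0 < (ν.rnDeriv μ p).toReal := ENNReal.toReal_pos h0 hp.ne
        conv_lhs => rw [← ENNReal.ofReal_toReal hp.ne]
        exact ENNReal.ofReal_rpow_of_pos hpos
    rw [lintegral_congr_ae hae, ← ofReal_integral_eq_lintegral_ofReal hrt
      (Filter.Eventually.of_forall fun p => Real.rpow_nonneg ENNReal.toReal_nonneg t)]

lemma aux_holder {α : Type*} [MeasurableSpace α] (ν μ : Measure α)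
    [IsProbabilityMeasure ν] [IsProbabilityMeasure μ] (hac : ν ≪ μ)
    (t : ℝ) (ht : 1 < t) (A : Set α) (hAmeas : MeasurableSet A) :
    ν A ≤ (∫⁻ p, (ν.rnDeriv μ p) ^ t ∂μ) ^ (1/t) * (μ A) ^ ((t-1)/t) := by
  have hq : t.HolderConjugate (t/(t-1)) := Real.HolderConjugate.conjExponent ht
  have h1 : ν A
      = ∫⁻ p, ((ν.rnDeriv μ * A.indicator (fun _ => (1:ENNReal))) p) ∂μ := by
    rw [← Measure.setLIntegral_rnDeriv hac A, ← lintegral_indicator hAmeas]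
    congr 1; funext p
    by_cases hp : p ∈ A <;>
      simp [Set.indicator_of_mem, Set.indicator_of_notMem, hp]
  have h2 := ENNReal.lintegral_mul_le_Lp_mul_Lq μ hq
    (f := ν.rnDeriv μ) (g := A.indicator (fun _ => (1:ENNReal)))
    (Measure.measurable_rnDeriv ν μ).aemeasurable
    ((measurable_const.indicator hAmeas).aemeasurable)
  rw [h1]
  have h3 : ∫⁻ p, (A.indicator (fun _ => (1:ENNReal)) p) ^ (t/(t-1)) ∂μ = μ A := by
    have : ∀ p, (A.indicator (fun _ => (1:ENNReal)) p) ^ (t/(t-1))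
        = A.indicator (fun _ => (1:ENNReal)) p := by
      intro p
      by_cases hp : p ∈ A <;>
        simp [hp, ENNReal.zero_rpow_of_pos
          (div_pos (by linarith) (by linarith) : (0:ℝ) < t/(t-1))]
    simp only [this]
    rw [lintegral_indicator hAmeas]
    simp
  calc ∫⁻ p, ((ν.rnDeriv μ * A.indicator (fun _ => (1:ENNReal))) p) ∂μ
      ≤ (∫⁻ p, (ν.rnDeriv μ p) ^ t ∂μ) ^ (1/t)
        * (∫⁻ p, (A.indicator (fun _ => (1:ENNReal)) p) ^ (t/(t-1)) ∂μ) ^ (1/(t/(t-1))) := h2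
    _ = (∫⁻ p, (ν.rnDeriv μ p) ^ t ∂μ) ^ (1/t) * (μ A) ^ ((t-1)/t) := by
        rw [h3, one_div_div]

lemma aux_real_ineq (t δ Ipt β K : ℝ) (ht : 1 < t) (hδ0 : 0 < δ)
    (hIptpos : 1 ≤ Ipt + 1) (hβ2 : 2 < β)
    (hβeq : (t-1) * β = Real.log (Ipt+1) - t * Real.log δ)
    (hKdef : K = Real.exp (2 / Real.exp 1 + 1) * β) :
    (Ipt + 1) ^ (1/t) * (2 * Real.exp (-K)) ^ ((t-1)/t) ≤ δ := by
  have ht0 : (0:ℝ) < t := by linarith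
  have hE2 : 2 ≤ Real.exp (2 / Real.exp 1 + 1) := by
    have h1 := Real.add_one_le_exp (2 / Real.exp 1 + 1)
    have h2 : (0:ℝ) ≤ 2 / Real.exp 1 := by positivity
    linarith
  have hlog2 : Real.log 2 ≤ 1 := by
    have := Real.log_le_sub_one_of_pos (by norm_num : (0:ℝ) < 2)
    linarith
  have hKey : β + Real.log 2 ≤ K := by
    rw [hKdef]
    nlinarith [mul_nonneg (by linarith : (0:ℝ) ≤ Real.exp (2 / Real.exp 1 + 1) - 2)
      (by linarith : (0:ℝ) ≤ β)]
  have hlhs_pos : 0 < (Ipt + 1) ^ (1/t) * (2 * Real.exp (-K)) ^ ((t-1)/t) := by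
    have h1 : (0:ℝ) < Ipt + 1 := by linarith
    have h2 : (0:ℝ) < 2 * Real.exp (-K) := by positivity
    positivity
  rw [← Real.log_le_log_iff hlhs_pos hδ0]
  rw [Real.log_mul (by positivity) (by positivity),
    Real.log_rpow (by linarith : (0:ℝ) < Ipt + 1),
    Real.log_rpow (by positivity : (0:ℝ) < 2 * Real.exp (-K)),
    Real.log_mul (by norm_num) (Real.exp_pos _).ne', Real.log_exp]
  rw [div_mul_eq_mul_div, div_mul_eq_mul_div, ← add_div, div_le_iff₀ ht0]
  have hprod : (t - 1) * (β + Real.log 2 - K) ≤ 0 :=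
    mul_nonpos_of_nonneg_of_nonpos (by linarith) (by linarith)
  linarith [hprod, hβeq]

/-- Single-draw high-probability generalization bound: with probability at least `1-δ`
under `P_{W,S}`,
`|gen| ≤ e^{1/e+1/2} √(2tσ²/(n(t-1))) √(log((I_P^{(t)}(W;S)+1)^{1/t}) + log(1/δ))`. -/
theorem single_draw_high_probability_bound
    {W S : Type*} [MeasurableSpace W] [MeasurableSpace S]
    (joint : Measure (W × S)) [IsProbabilityMeasure joint]
    (gen : W → S → ℝ) (hgen : Measurable (Function.uncurry gen))
    (σ : ℝ) (hσ : 0 < σ) (n : ℕ) (hn : 0 < n)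
    (hsubg : ∀ w : W, IsSubgaussian (fun s => gen w s) (σ / Real.sqrt n) joint.snd)
    (hmean : ∀ w : W, ∫ s, gen w s ∂joint.snd = 0)
    (hac : joint ≪ joint.fst.prod joint.snd)
    (t : ℝ) (ht : 1 < t)
    (hrt : Integrable
      (fun p => ((joint.rnDeriv (joint.fst.prod joint.snd) p).toReal) ^ t)
      (joint.fst.prod joint.snd))
    (hint : ∀ k : ℕ, Integrable (fun p => (gen p.1 p.2) ^ k) joint)
    (δ : ℝ) (hδ : δ ∈ Set.Ioo (0 : ℝ) 1)
    (Ipt : ℝ)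
    (hIpt : Ipt = (∫ p, (((joint.rnDeriv (joint.fst.prod joint.snd) p).toReal) ^ t - 1)
        ∂(joint.fst.prod joint.snd)))
    (β : ℝ) (hβ : β = (1 / (t - 1)) * Real.log ((Ipt + 1) / δ ^ t))
    (hβ2 : 2 < β) (hβint : ∃ k : ℕ, (k : ℝ) = β) :
    joint {p | Real.exp (1 / Real.exp 1 + 1 / 2) *
        Real.sqrt (2 * t * σ ^ 2 / (n * (t - 1))) *
        Real.sqrt (Real.log ((Ipt + 1) ^ (1 / t)) + Real.log (1 / δ)) <
          |gen p.1 p.2|} ≤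
      ENNReal.ofReal δ := by
  obtain ⟨hδ0, hδ1⟩ := hδ
  have ht0 : (0:ℝ) < t := by linarith
  have ht1 : (0:ℝ) < t - 1 := by linarith
  have hn0 : (0:ℝ) < (n:ℝ) := by exact_mod_cast hn
  set μ := joint.fst.prod joint.snd with hμdef
  set r := joint.rnDeriv μ with hrdef
  obtain ⟨hIptpos', hlint⟩ := aux_integral_facts joint μ hac t ht hrt
  have hIpt1 : Ipt + 1 = ∫ p, (r p).toReal ^ t ∂μ := by
    rw [hIpt, integral_sub hrt (integrable_const 1)]
    simp
  have hIptpos : 1 ≤ Ipt + 1 := hIpt1 ▸ hIptpos'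
  rw [← hIpt1] at hlint
  -- the threshold and its square
  set c := Real.exp (1 / Real.exp 1 + 1 / 2) *
      Real.sqrt (2 * t * σ ^ 2 / (n * (t - 1))) *
      Real.sqrt (Real.log ((Ipt + 1) ^ (1 / t)) + Real.log (1 / δ)) with hcdef
  have hβeq : (t-1) * β = Real.log (Ipt+1) - t * Real.log δ := by
    rw [hβ, Real.log_div (by linarith) (Real.rpow_pos_of_pos hδ0 t).ne',
      Real.log_rpow hδ0]
    field_simp
  have hL : Real.log ((Ipt + 1) ^ (1 / t)) + Real.log (1 / δ) = β * (t-1) / t := by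
    rw [Real.log_rpow (by linarith : (0:ℝ) < Ipt + 1), one_div δ, Real.log_inv]
    field_simp
    nlinarith [hβeq]
  have hLpos : 0 < β * (t-1) / t := by positivity
  have hc0 : 0 < c := by
    rw [hcdef, hL]
    have h1 : 0 < 2 * t * σ ^ 2 / (n * (t - 1)) := by positivity
    positivity
  set K := Real.exp (2 / Real.exp 1 + 1) * β with hKdef
  have hc2 : c ^ 2 = Real.exp (2 / Real.exp 1 + 1) * (2 * t * σ ^ 2 / (n * (t - 1)))
      * (β * (t-1) / t) := by
    rw [hcdef, hL, mul_pow, mul_pow,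
      Real.sq_sqrt (by positivity : (0:ℝ) ≤ 2 * t * σ ^ 2 / (n * (t - 1))),
      Real.sq_sqrt (le_of_lt hLpos), sq, ← Real.exp_add]
    ring_nf
  have hexp : -c ^ 2 / (2 * (σ ^ 2 / n)) = -K := by
    rw [hc2, hKdef]
    field_simp
  -- the event
  set A := {p : W × S | c < |gen p.1 p.2|} with hAdef
  have hAmeas : MeasurableSet A :=
    measurableSet_lt measurable_const hgen.abs
  -- tail bound for each w
  have hs2 : (0:ℝ) < σ ^ 2 / n := by positivity
  have htail : ∀ w : W, joint.snd {s | c < |gen w s|}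
      ≤ 2 * ENNReal.ofReal (Real.exp (-K)) := by
    intro w
    have hXmeas : Measurable (fun s => gen w s) := hgen.comp measurable_prodMk_left
    have hsw : ∀ l : ℝ, Integrable (fun s => Real.exp (l * gen w s)) joint.snd ∧
        ∫ s, Real.exp (l * gen w s) ∂joint.snd ≤ Real.exp (l ^ 2 * (σ ^ 2 / n) / 2) := by
      intro l
      have h := hsubg w l
      have heq : (σ / Real.sqrt n) ^ 2 = σ ^ 2 / n := by
        rw [div_pow, Real.sq_sqrt (Nat.cast_nonneg n)]
      rw [heq] at h
      exact h
    have := chernoff_abs joint.snd (fun s => gen w s) hXmeas (σ ^ 2 / n) hs2 hsw c hc0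
    rwa [hexp] at this
  -- bound on μ A
  have hμA : μ A ≤ 2 * ENNReal.ofReal (Real.exp (-K)) := by
    rw [hμdef, Measure.prod_apply hAmeas]
    calc ∫⁻ w, joint.snd (Prod.mk w ⁻¹' A) ∂joint.fst
        ≤ ∫⁻ _, 2 * ENNReal.ofReal (Real.exp (-K)) ∂joint.fst := by
          apply lintegral_mono
          intro w
          exact htail w
      _ = 2 * ENNReal.ofReal (Real.exp (-K)) := by
          rw [lintegral_const]
          simp
  have hreal := aux_real_ineq t δ Ipt β K ht hδ0 hIptpos hβ2 hβeq hKdef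
  -- conclude
  calc joint A ≤ (∫⁻ p, (r p) ^ t ∂μ) ^ (1/t) * (μ A) ^ ((t-1)/t) :=
        aux_holder joint μ hac t ht A hAmeas
    _ ≤ ENNReal.ofReal (Ipt + 1) ^ (1/t)
        * (2 * ENNReal.ofReal (Real.exp (-K))) ^ ((t-1)/t) := by
        rw [hlint]
        apply mul_le_mul_right
        exact ENNReal.rpow_le_rpow hμA (by positivity)
    _ = ENNReal.ofReal ((Ipt + 1) ^ (1/t) * (2 * Real.exp (-K)) ^ ((t-1)/t)) := by
        rw [show (2 : ENNReal) * ENNReal.ofReal (Real.exp (-K))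
            = ENNReal.ofReal (2 * Real.exp (-K)) by
          rw [ENNReal.ofReal_mul (by norm_num)]; norm_num]
        rw [ENNReal.ofReal_rpow_of_pos (by linarith : (0:ℝ) < Ipt + 1),
          ENNReal.ofReal_rpow_of_pos (by positivity : (0:ℝ) < 2 * Real.exp (-K)),
          ← ENNReal.ofReal_mul (by positivity)]
    _ ≤ ENNReal.ofReal δ := ENNReal.ofReal_le_ofReal hreal
end
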